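/- Let A be a gauge field on the cube B such that dA(p) = 0 for every plaquette p contained in B. Then A(Γ^π_{0x}) = A(Γ_{0x}) for every permutation π of {1,2,3} and every x ∈ B; in particular (τA)(x) = (τ⁰A)(x) for all x ∈ B. -/

import Mathlib

open Finset

noncomputable section

/-- Points of the lattice `ℤ³`. -/
abbrev Pt : Type := Fin 3 → ℤ

/-- The standard unit vector `e_μ`. -/
def unitVec (μ : Fin 3) : Pt := fun i => if i = μ then 1 else 0

/-- Membership in the cube `B = {x : |x i| ≤ (L-1)/2}` (for odd `L`). -/
def inCube (L : ℤ) (x : Pt) : Prop := ∀ i, |x i| ≤ (L - 1) / 2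

/-- Shift a point by `k` steps in direction `μ`. -/
def shiftPt (z : Pt) (μ : Fin 3) (k : ℤ) : Pt := fun i => if i = μ then z i + k else z i

/-- The sum of the gauge field `A` along the straight lattice path from `z` to `z + t·e_μ`. -/
def seg (A : Pt → Pt → ℝ) (z : Pt) (μ : Fin 3) (t : ℤ) : ℝ :=
  if 0 ≤ t then ∑ j ∈ Finset.range t.toNat, A (shiftPt z μ (j : ℤ)) (shiftPt z μ ((j : ℤ) + 1))
  else ∑ j ∈ Finset.range (-t).toNat, A (shiftPt z μ (-(j : ℤ))) (shiftPt z μ (-(j : ℤ) - 1))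

/-- The field strength `dA` on the plaquette based at `x`, spanned by `e_μ, e_ν`. -/
def plaq (A : Pt → Pt → ℝ) (x : Pt) (μ ν : Fin 3) : ℝ :=
  A x (x + unitVec μ) + A (x + unitVec μ) (x + unitVec μ + unitVec ν)
    + A (x + unitVec μ + unitVec ν) (x + unitVec ν) + A (x + unitVec ν) x

/-- The corner of the rectilinear path `Γ^π_{yx}` reached after the first `m` coordinate
moves: coordinates `π 0, …, π (m-1)` are already at their final values. -/
def interPt (y x : Pt) (π : Equiv.Perm (Fin 3)) (m : ℕ) : Pt :=
  fun i => if ((π.symm i : Fin 3) : ℕ) < m then x i else y i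

/-- `A(Γ^π_{yx})`: the sum of `A` along the rectilinear path from `y` to `x` which moves
the coordinates to their final values in the order `π 0, π 1, π 2`. -/
def gammaSum (A : Pt → Pt → ℝ) (π : Equiv.Perm (Fin 3)) (y x : Pt) : ℝ :=
  ∑ m : Fin 3, seg A (interPt y x π (m : ℕ)) (π m) (x (π m) - y (π m))

/-- `(τ⁰A)(x) = A(Γ_{0x})`, for the identity ordering of coordinates. -/
def tau0 (A : Pt → Pt → ℝ) (x : Pt) : ℝ := gammaSum A 1 0 x

/-- `(τA)(x) = (1/6) Σ_π A(Γ^π_{0x})`, averaged over the `3! = 6` permutations. -/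
def tau (A : Pt → Pt → ℝ) (x : Pt) : ℝ :=
  (1 / 6) * ∑ π : Equiv.Perm (Fin 3), gammaSum A π 0 x

-- aux
lemma shiftPt_shiftPt (z : Pt) (μ : Fin 3) (a b : ℤ) :
    shiftPt (shiftPt z μ a) μ b = shiftPt z μ (a + b) := by
  funext i; simp only [shiftPt]; split_ifs <;> ring

lemma shiftPt_zero (z : Pt) (μ : Fin 3) : shiftPt z μ 0 = z := by
  funext i; simp only [shiftPt]; split_ifs <;> omega

lemma shiftPt_one (z : Pt) (μ : Fin 3) : shiftPt z μ 1 = z + unitVec μ := by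
  funext i; simp only [shiftPt, unitVec, Pi.add_apply]; split_ifs <;> omega

lemma shiftPt_comm (z : Pt) {μ ν : Fin 3} (h : μ ≠ ν) (a b : ℤ) :
    shiftPt (shiftPt z μ a) ν b = shiftPt (shiftPt z ν b) μ a := by
  funext i; simp only [shiftPt]
  by_cases h1 : i = μ <;> by_cases h2 : i = ν <;> simp_all

lemma shiftPt_congr (z : Pt) (μ : Fin 3) {a b : ℤ} (h : a = b) :
    shiftPt z μ a = shiftPt z μ b := by rw [h]

def segNat (A : Pt → Pt → ℝ) (z : Pt) (μ : Fin 3) (n : ℕ) : ℝ :=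
  ∑ j ∈ Finset.range n, A (shiftPt z μ (j : ℤ)) (shiftPt z μ ((j : ℤ) + 1))

lemma seg_ofNat (A : Pt → Pt → ℝ) (z : Pt) (μ : Fin 3) (n : ℕ) :
    seg A z μ (n : ℤ) = segNat A z μ n := by
  simp [seg, segNat]

lemma segNat_succ (A : Pt → Pt → ℝ) (z : Pt) (μ : Fin 3) (n : ℕ) :
    segNat A z μ (n + 1) = segNat A z μ n
      + A (shiftPt z μ (n : ℤ)) (shiftPt z μ ((n : ℤ) + 1)) := by
  simp [segNat, Finset.sum_range_succ]

lemma seg_negNat (A : Pt → Pt → ℝ) (hA : ∀ x x', A x x' = - A x' x)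
    (z : Pt) (μ : Fin 3) (n : ℕ) :
    seg A z μ (-(n : ℤ)) = - segNat A (shiftPt z μ (-(n : ℤ))) μ n := by
  rcases Nat.eq_zero_or_pos n with h | h
  · subst h; simp [seg, segNat]
  · have hneg : ¬ (0 ≤ (-(n : ℤ))) := by omega
    rw [seg, if_neg hneg]
    have : (-(-(n:ℤ))).toNat = n := by omega
    rw [this, segNat, ← Finset.sum_range_reflect, ← Finset.sum_neg_distrib]
    apply Finset.sum_congr rfl
    intro j hj
    rw [Finset.mem_range] at hj
    rw [← hA]
    congr 1
    · rw [shiftPt_shiftPt]; apply shiftPt_congr; omega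
    · rw [shiftPt_shiftPt]; apply shiftPt_congr; omega
lemma shiftPt_add_unitVec (z : Pt) (μ ν : Fin 3) (a : ℤ) :
    shiftPt z μ a + unitVec ν = shiftPt (z + unitVec ν) μ a := by
  funext i; simp only [shiftPt, unitVec, Pi.add_apply]; split_ifs <;> ring

lemma row_lemma (A : Pt → Pt → ℝ) (hA : ∀ x x', A x x' = - A x' x)
    (z : Pt) (μ ν : Fin 3) (s : ℕ)
    (hp : ∀ j : ℕ, j < s → plaq A (shiftPt z μ (j : ℤ)) μ ν = 0) :
    A z (z + unitVec ν) + segNat A (z + unitVec ν) μ s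
      = segNat A z μ s + A (shiftPt z μ (s : ℤ)) (shiftPt z μ (s : ℤ) + unitVec ν) := by
  induction s with
  | zero => simp [segNat, shiftPt_zero]
  | succ n ih =>
    have ih' := ih (fun j hj => hp j (by omega))
    have hw := hp n (by omega)
    set w := shiftPt z μ (n : ℤ) with hwdef
    rw [plaq] at hw
    have e1 : shiftPt (z + unitVec ν) μ (n : ℤ) = w + unitVec ν := by
      rw [← shiftPt_add_unitVec]
    have e3 : shiftPt z μ ((n : ℤ) + 1) = w + unitVec μ := by
      rw [← shiftPt_one w μ, hwdef, shiftPt_shiftPt]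
    have e2 : shiftPt (z + unitVec ν) μ ((n : ℤ) + 1) = w + unitVec μ + unitVec ν := by
      rw [← shiftPt_add_unitVec, e3]
    have e4 : shiftPt z μ ((n + 1 : ℕ) : ℤ) = w + unitVec μ := by
      rw [← e3]; apply shiftPt_congr; push_cast; ring
    rw [segNat_succ, segNat_succ, e1, e2, e3, e4]
    have e5 : shiftPt (z + unitVec ν) μ ((n + 1 : ℕ) : ℤ) = w + unitVec μ + unitVec ν := by
      rw [← e2]; apply shiftPt_congr; push_cast; ring
    have h1 := hA (w + unitVec μ + unitVec ν) (w + unitVec ν)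
    have h2 := hA (w + unitVec ν) w
    linarith

lemma rectNat (A : Pt → Pt → ℝ) (hA : ∀ x x', A x x' = - A x' x)
    (z : Pt) (μ ν : Fin 3) (hμν : μ ≠ ν) (s t : ℕ)
    (hp : ∀ a b : ℕ, a < s → b < t →
      plaq A (shiftPt (shiftPt z μ (a : ℤ)) ν (b : ℤ)) μ ν = 0) :
    segNat A z μ s + segNat A (shiftPt z μ (s : ℤ)) ν t
      = segNat A z ν t + segNat A (shiftPt z ν (t : ℤ)) μ s := by
  induction t with
  | zero => simp [segNat, shiftPt_zero]
  | succ n ih =>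
    have ih' := ih (fun a b ha hb => hp a b ha (by omega))
    set v := shiftPt z ν (n : ℤ) with hvdef
    set u := shiftPt (shiftPt z μ (s : ℤ)) ν (n : ℤ) with hudef
    have hrow := row_lemma A hA v μ ν s (fun j hj => by
      have := hp j n hj (by omega)
      rwa [shiftPt_comm _ hμν] at this)
    have e0 : shiftPt v μ (s : ℤ) = u := by
      rw [hvdef, hudef, shiftPt_comm _ hμν]
    have e1 : shiftPt z ν ((n : ℤ) + 1) = v + unitVec ν := by
      rw [← shiftPt_one v ν, hvdef, shiftPt_shiftPt]
    have e2 : shiftPt (shiftPt z μ (s : ℤ)) ν ((n : ℤ) + 1) = u + unitVec ν := by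
      rw [← shiftPt_one u ν, hudef, shiftPt_shiftPt]
    have e1' : shiftPt z ν ((n + 1 : ℕ) : ℤ) = v + unitVec ν := by
      rw [← e1]; apply shiftPt_congr; push_cast; ring
    rw [e0] at hrow
    rw [segNat_succ, segNat_succ, e1, e1', e2, ← hvdef, ← hudef]
    linarith
lemma rectZ_nn (A : Pt → Pt → ℝ) (hA : ∀ x x', A x x' = - A x' x)
    (z : Pt) (μ ν : Fin 3) (hμν : μ ≠ ν) (s t : ℤ) (hs : 0 ≤ s) (ht : 0 ≤ t)
    (hp : ∀ a b : ℤ, 0 ≤ a → a < s → 0 ≤ b → b < t →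
      plaq A (shiftPt (shiftPt z μ a) ν b) μ ν = 0) :
    seg A z μ s + seg A (shiftPt z μ s) ν t
      = seg A z ν t + seg A (shiftPt z ν t) μ s := by
  lift s to ℕ using hs with m
  lift t to ℕ using ht with n
  rw [seg_ofNat, seg_ofNat, seg_ofNat, seg_ofNat]
  exact rectNat A hA z μ ν hμν m n (fun a b ha hb =>
    hp a b (by positivity) (by exact_mod_cast ha) (by positivity) (by exact_mod_cast hb))

lemma rectZ_s (A : Pt → Pt → ℝ) (hA : ∀ x x', A x x' = - A x' x)
    (z : Pt) (μ ν : Fin 3) (hμν : μ ≠ ν) (s t : ℤ) (hs : 0 ≤ s)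
    (hp : ∀ a b : ℤ, min s 0 ≤ a → a < max s 0 → min t 0 ≤ b → b < max t 0 →
      plaq A (shiftPt (shiftPt z μ a) ν b) μ ν = 0) :
    seg A z μ s + seg A (shiftPt z μ s) ν t
      = seg A z ν t + seg A (shiftPt z ν t) μ s := by
  rcases le_or_gt 0 t with ht | ht
  · exact rectZ_nn A hA z μ ν hμν s t hs ht (fun a b h1 h2 h3 h4 =>
      hp a b (by omega) (by omega) (by omega) (by omega))
  · set w := shiftPt z ν t with hwdef
    set m : ℕ := (-t).toNat with hmdef
    have hm : t = -(m : ℤ) := by omega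
    have hE := rectZ_nn A hA w μ ν hμν s (m : ℤ) hs (by positivity) (fun a b h1 h2 h3 h4 => by
      have : shiftPt (shiftPt w μ a) ν b = shiftPt (shiftPt z μ a) ν (t + b) := by
        rw [hwdef, shiftPt_comm _ hμν, shiftPt_shiftPt, shiftPt_comm _ hμν]
      rw [this]
      exact hp a (t + b) (by omega) (by omega) (by omega) (by omega))
    have ez : shiftPt w ν (m : ℤ) = z := by
      rw [hwdef, shiftPt_shiftPt]
      have : t + (m : ℤ) = 0 := by omega
      rw [this, shiftPt_zero]
    have f1 : seg A z ν t = - seg A w ν (m : ℤ) := by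
      rw [seg_ofNat]
      have : seg A z ν t = seg A z ν (-(m:ℤ)) := by rw [← hm]
      rw [this, seg_negNat A hA, hwdef]
      congr 2
      apply shiftPt_congr; omega
    have f2 : seg A (shiftPt z μ s) ν t = - seg A (shiftPt w μ s) ν (m : ℤ) := by
      rw [seg_ofNat]
      have e : seg A (shiftPt z μ s) ν t = seg A (shiftPt z μ s) ν (-(m:ℤ)) := by rw [← hm]
      rw [e, seg_negNat A hA]
      congr 2
      rw [hwdef, shiftPt_comm _ hμν]
      apply congrArg (fun p => shiftPt p μ s)
      apply shiftPt_congr; omega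
    rw [ez] at hE
    rw [f1, f2]
    linarith

lemma rectZ (A : Pt → Pt → ℝ) (hA : ∀ x x', A x x' = - A x' x)
    (z : Pt) (μ ν : Fin 3) (hμν : μ ≠ ν) (s t : ℤ)
    (hp : ∀ a b : ℤ, min s 0 ≤ a → a < max s 0 → min t 0 ≤ b → b < max t 0 →
      plaq A (shiftPt (shiftPt z μ a) ν b) μ ν = 0) :
    seg A z μ s + seg A (shiftPt z μ s) ν t
      = seg A z ν t + seg A (shiftPt z ν t) μ s := by
  rcases le_or_gt 0 s with hs | hs
  · exact rectZ_s A hA z μ ν hμν s t hs hp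
  · set w := shiftPt z μ s with hwdef
    set m : ℕ := (-s).toNat with hmdef
    have hm : s = -(m : ℤ) := by omega
    have hE := rectZ_s A hA w μ ν hμν (m : ℤ) t (by positivity) (fun a b h1 h2 h3 h4 => by
      have : shiftPt (shiftPt w μ a) ν b = shiftPt (shiftPt z μ (s + a)) ν b := by
        rw [hwdef, shiftPt_shiftPt]
      rw [this]
      exact hp (s + a) b (by omega) (by omega) (by omega) (by omega))
    have ez : shiftPt w μ (m : ℤ) = z := by
      rw [hwdef, shiftPt_shiftPt]
      have : s + (m : ℤ) = 0 := by omega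
      rw [this, shiftPt_zero]
    have f1 : seg A z μ s = - seg A w μ (m : ℤ) := by
      rw [seg_ofNat]
      have e : seg A z μ s = seg A z μ (-(m:ℤ)) := by rw [← hm]
      rw [e, seg_negNat A hA, hwdef]
      congr 2
      apply shiftPt_congr; omega
    have f2 : seg A (shiftPt z ν t) μ s = - seg A (shiftPt w ν t) μ (m : ℤ) := by
      rw [seg_ofNat]
      have e : seg A (shiftPt z ν t) μ s = seg A (shiftPt z ν t) μ (-(m:ℤ)) := by rw [← hm]
      rw [e, seg_negNat A hA]
      congr 2
      rw [hwdef, shiftPt_comm _ hμν.symm]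
      apply congrArg (fun p => shiftPt p ν t)
      apply shiftPt_congr; omega
    rw [ez] at hE
    rw [f1, f2]
    linarith
def triP (A : Pt → Pt → ℝ) (x : Pt) (μ ν ρ : Fin 3) : ℝ :=
  seg A 0 μ (x μ) + seg A (shiftPt 0 μ (x μ)) ν (x ν)
    + seg A (shiftPt (shiftPt 0 μ (x μ)) ν (x ν)) ρ (x ρ)

lemma interPt_zero (x : Pt) (π : Equiv.Perm (Fin 3)) : interPt 0 x π 0 = 0 := by
  funext i; simp [interPt]

lemma interPt_one (x : Pt) (π : Equiv.Perm (Fin 3)) :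
    interPt 0 x π 1 = shiftPt 0 (π 0) (x (π 0)) := by
  funext i
  simp only [interPt, shiftPt, Pi.zero_apply, zero_add]
  by_cases h : i = π 0
  · subst h
    rw [if_pos, if_pos rfl]
    simp
  · have hs : π.symm i ≠ 0 := fun hc => h (by
      have := congrArg π hc
      rwa [Equiv.apply_symm_apply] at this)
    rw [if_neg, if_neg h]
    simp only [ne_eq, Fin.ext_iff, Fin.val_zero, Fin.val_one] at hs
    omega

lemma interPt_two (x : Pt) (π : Equiv.Perm (Fin 3)) :
    interPt 0 x π 2 = shiftPt (shiftPt 0 (π 0) (x (π 0))) (π 1) (x (π 1)) := by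
  funext i
  have h01 : π 0 ≠ π 1 := fun h => by simpa using π.injective h
  simp only [interPt, shiftPt, Pi.zero_apply, zero_add]
  by_cases h0 : i = π 0
  · subst h0
    rw [if_pos, if_neg h01, if_pos rfl]
    simp
  · by_cases h1 : i = π 1
    · subst h1
      rw [if_pos, if_pos rfl]
      · simp
      · simp
    · have hs0 : π.symm i ≠ 0 := fun hc => h0 (by
        have := congrArg π hc; rwa [Equiv.apply_symm_apply] at this)
      have hs1 : π.symm i ≠ 1 := fun hc => h1 (by
        have := congrArg π hc; rwa [Equiv.apply_symm_apply] at this)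
      rw [if_neg, if_neg h1, if_neg h0]
      simp only [ne_eq, Fin.ext_iff, Fin.val_zero, Fin.val_one] at hs0 hs1
      omega

lemma gammaSum_eq_triP (A : Pt → Pt → ℝ) (π : Equiv.Perm (Fin 3)) (x : Pt) :
    gammaSum A π 0 x = triP A x (π 0) (π 1) (π 2) := by
  rw [gammaSum, Fin.sum_univ_three, triP]
  simp only [Pi.zero_apply, sub_zero, Fin.val_zero, Fin.val_one, Fin.val_two]
  rw [interPt_zero, interPt_one, interPt_two]
lemma inCube_between (L : ℤ) {x : Pt} (hx : inCube L x) {y : Pt}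
    (hy : ∀ i, min (x i) 0 ≤ y i ∧ y i ≤ max (x i) 0) : inCube L y := by
  intro i
  have h1 := hx i
  have h2 := hy i
  rw [abs_le] at *
  omega

lemma triP_swap12 (L : ℤ) (A : Pt → Pt → ℝ) (hA : ∀ x x', A x x' = - A x' x)
    (hdA : ∀ (x : Pt) (μ ν : Fin 3), μ ≠ ν →
      inCube L x → inCube L (x + unitVec μ) → inCube L (x + unitVec ν) →
      inCube L (x + unitVec μ + unitVec ν) → plaq A x μ ν = 0)
    (x : Pt) (hx : inCube L x) {μ ν ρ : Fin 3} (hμν : μ ≠ ν) (hμρ : μ ≠ ρ)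
    (hνρ : ν ≠ ρ) : triP A x μ ν ρ = triP A x ν μ ρ := by
  have key := rectZ A hA 0 μ ν hμν (x μ) (x ν) (fun a b h1 h2 h3 h4 => by
    apply hdA _ μ ν hμν <;>
    · apply inCube_between L hx
      intro i
      simp only [shiftPt, unitVec, Pi.add_apply, Pi.zero_apply]
      split_ifs <;> subst_vars <;> first | omega | simp_all)
  rw [triP, triP, shiftPt_comm 0 hμν]
  linarith

lemma triP_swap23 (L : ℤ) (A : Pt → Pt → ℝ) (hA : ∀ x x', A x x' = - A x' x)
    (hdA : ∀ (x : Pt) (μ ν : Fin 3), μ ≠ ν →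
      inCube L x → inCube L (x + unitVec μ) → inCube L (x + unitVec ν) →
      inCube L (x + unitVec μ + unitVec ν) → plaq A x μ ν = 0)
    (x : Pt) (hx : inCube L x) {μ ν ρ : Fin 3} (hμν : μ ≠ ν) (hμρ : μ ≠ ρ)
    (hνρ : ν ≠ ρ) : triP A x μ ν ρ = triP A x μ ρ ν := by
  have key := rectZ A hA (shiftPt 0 μ (x μ)) ν ρ hνρ (x ν) (x ρ)
    (fun a b h1 h2 h3 h4 => by
      apply hdA _ ν ρ hνρ <;>
      · apply inCube_between L hx
        intro i
        simp only [shiftPt, unitVec, Pi.add_apply, Pi.zero_apply]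
        split_ifs <;> subst_vars <;> first | omega | simp_all)
  rw [triP, triP]
  linarith

lemma fin3_cases {μ ν ρ : Fin 3} (hμν : μ ≠ ν) (hμρ : μ ≠ ρ) (hνρ : ν ≠ ρ) :
    (μ=0∧ν=1∧ρ=2)∨(μ=0∧ν=2∧ρ=1)∨(μ=1∧ν=0∧ρ=2)∨(μ=1∧ν=2∧ρ=0)
      ∨(μ=2∧ν=0∧ρ=1)∨(μ=2∧ν=1∧ρ=0) := by
  fin_cases μ <;> fin_cases ν <;> fin_cases ρ <;> simp_all <;> rfl

lemma triP_eq_id (L : ℤ) (A : Pt → Pt → ℝ) (hA : ∀ x x', A x x' = - A x' x)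
    (hdA : ∀ (x : Pt) (μ ν : Fin 3), μ ≠ ν →
      inCube L x → inCube L (x + unitVec μ) → inCube L (x + unitVec ν) →
      inCube L (x + unitVec μ + unitVec ν) → plaq A x μ ν = 0)
    (x : Pt) (hx : inCube L x) {μ ν ρ : Fin 3} (hμν : μ ≠ ν) (hμρ : μ ≠ ρ)
    (hνρ : ν ≠ ρ) : triP A x μ ν ρ = triP A x 0 1 2 := by
  have s12 : ∀ (a b c : Fin 3), a ≠ b → a ≠ c → b ≠ c →
      triP A x a b c = triP A x b a c := fun a b c h1 h2 h3 =>
    triP_swap12 L A hA hdA x hx h1 h2 h3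
  have s23 : ∀ (a b c : Fin 3), a ≠ b → a ≠ c → b ≠ c →
      triP A x a b c = triP A x a c b := fun a b c h1 h2 h3 =>
    triP_swap23 L A hA hdA x hx h1 h2 h3
  rcases fin3_cases hμν hμρ hνρ with ⟨h1,h2,h3⟩|⟨h1,h2,h3⟩|⟨h1,h2,h3⟩|⟨h1,h2,h3⟩
    |⟨h1,h2,h3⟩|⟨h1,h2,h3⟩ <;> subst h1 <;> subst h2 <;> subst h3
  · rfl
  · exact s23 0 2 1 (by decide) (by decide) (by decide)
  · exact s12 1 0 2 (by decide) (by decide) (by decide)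
  · rw [s23 1 2 0 (by decide) (by decide) (by decide),
      s12 1 0 2 (by decide) (by decide) (by decide)]
  · rw [s12 2 0 1 (by decide) (by decide) (by decide),
      s23 0 2 1 (by decide) (by decide) (by decide)]
  · rw [s12 2 1 0 (by decide) (by decide) (by decide),
      s23 1 2 0 (by decide) (by decide) (by decide),
      s12 1 0 2 (by decide) (by decide) (by decide)]

/-- If a gauge field `A` on the cube `B` has vanishing field strength on
every plaquette contained in `B`, then `A(Γ^π_{0x}) = A(Γ_{0x})` for every permutation `π`
and every `x ∈ B`; in particular `(τA)(x) = (τ⁰A)(x)` for all `x ∈ B`. -/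
theorem path_sum_independent_of_ordering (L : ℤ) (hL3 : 3 ≤ L) (hLodd : Odd L)
    (A : Pt → Pt → ℝ) (hA : ∀ x x', A x x' = - A x' x)
    (hdA : ∀ (x : Pt) (μ ν : Fin 3), μ ≠ ν →
      inCube L x → inCube L (x + unitVec μ) → inCube L (x + unitVec ν) →
      inCube L (x + unitVec μ + unitVec ν) → plaq A x μ ν = 0) :
    (∀ (π : Equiv.Perm (Fin 3)) (x : Pt), inCube L x →
        gammaSum A π 0 x = gammaSum A 1 0 x) ∧
    (∀ x : Pt, inCube L x → tau A x = tau0 A x) := by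
  have main : ∀ (π : Equiv.Perm (Fin 3)) (x : Pt), inCube L x →
      gammaSum A π 0 x = gammaSum A 1 0 x := by
    intro π x hx
    rw [gammaSum_eq_triP, gammaSum_eq_triP]
    have h0 : (1 : Equiv.Perm (Fin 3)) 0 = 0 := rfl
    have h1 : (1 : Equiv.Perm (Fin 3)) 1 = 1 := rfl
    have h2 : (1 : Equiv.Perm (Fin 3)) 2 = 2 := rfl
    rw [h0, h1, h2]
    exact triP_eq_id L A hA hdA x hx
      (fun h => by simpa using π.injective h)
      (fun h => by simpa using π.injective h)
      (fun h => by simpa using π.injective h)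
  refine ⟨main, fun x hx => ?_⟩
  rw [tau, tau0]
  have : ∀ π : Equiv.Perm (Fin 3), gammaSum A π 0 x = gammaSum A 1 0 x :=
    fun π => main π x hx
  rw [Finset.sum_congr rfl (fun π _ => this π), Finset.sum_const]
  have hcard : Fintype.card (Equiv.Perm (Fin 3)) = 6 := by
    simp [Fintype.card_perm, Nat.factorial]
  simp only [Finset.card_univ, hcard]
  push_cast
  ring
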